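/- There does not exist a constant equivalent representing a binary relation on l∞ that satisfies axioms (A1)–(A5), ISU, and Invariance with respect to Permutation of Improving Sequences (IPIS); that is, no binary relation ≿ on l∞ satisfying (A1)–(A5), ISU, and IPIS admits a function I : l∞ → ℝ with x ∼ I(x) for all x ∈ l∞. -/

import Mathlib

open scoped ENNReal BoundedContinuousFunction

noncomputable section

/-- `l∞`: the Banach space of bounded real sequences with the sup norm. -/
abbrev Linf : Type := BoundedContinuousFunction ℕ ℝ

/-- `ba(ℕ)`: the norm dual of `l∞`, endowed with the weak* topology. -/
abbrev Ba : Type := WeakDual ℝ Linf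

/-- The constant sequence `(θ, θ, ...)`. -/
def cst (θ : ℝ) : Linf := BoundedContinuousFunction.const ℕ θ

/-- Build an element of `l∞` from a bounded sequence. -/
def ofSeq (f : ℕ → ℝ) (C : ℝ) (h : ∀ n, |f n| ≤ C) : Linf :=
  BoundedContinuousFunction.ofNormedAddCommGroupDiscrete f C
    (by simpa [Real.norm_eq_abs] using h)

/-- The delayed sequence `(0, d₀, d₁, d₂, ...)`. -/
def delaySeq (d : Linf) : Linf :=
  ofSeq (fun n => if n = 0 then 0 else d (n - 1)) ‖d‖ (by
    intro n
    by_cases h : n = 0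
    · simp [h]
    · simpa [h, Real.norm_eq_abs] using d.norm_coe_le_norm (n - 1))

/-- The shifted sequence `(x₁, x₂, x₃, ...)`. -/
def shiftSeq (x : Linf) : Linf :=
  x.compContinuous ⟨fun n => n + 1, continuous_of_discreteTopology⟩

/-- The permuted sequence `x_σ = (x_{σ 0}, x_{σ 1}, ...)`. -/
def permSeq (σ : Equiv.Perm ℕ) (x : Linf) : Linf :=
  x.compContinuous ⟨fun n => σ n, continuous_of_discreteTopology⟩

/-- The indicator sequence of a set `A ⊆ ℕ`. -/
def indic (A : Set ℕ) : Linf :=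
  ofSeq (A.indicator fun _ => (1 : ℝ)) 1 (by
    intro n
    by_cases h : n ∈ A
    · simp [Set.indicator_of_mem h]
    · simp [Set.indicator_of_notMem h])

/-- `kEx`: the sequence equal to `k` on `E` and to `x` off `E`. -/
def patch (k : ℝ) (E : Set ℕ) (x : Linf) : Linf :=
  ofSeq (fun n => E.indicator (fun _ => k) n + Eᶜ.indicator (fun m => x m) n)
    (|k| + ‖x‖) (by
    intro n
    by_cases h : n ∈ E
    · simp only [Set.indicator_of_mem h, Set.indicator_of_notMem (by simpa using h :
        n ∉ Eᶜ), add_zero]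
      exact le_add_of_le_of_nonneg le_rfl (norm_nonneg x)
    · simp only [Set.indicator_of_notMem h, Set.indicator_of_mem (by simpa using h :
        n ∈ Eᶜ), zero_add]
      calc |x n| ≤ ‖x‖ := by simpa [Real.norm_eq_abs] using x.norm_coe_le_norm n
      _ ≤ |k| + ‖x‖ := le_add_of_nonneg_left (abs_nonneg k))

/-- The exponential discounted sum `(1-δ) ∑ δ^t x_t` (convention `0^0 = 1`). -/
def discSum (δ : ℝ) (x : Linf) : ℝ := (1 - δ) * ∑' t, δ ^ t * x t

/-! ### Axioms -/

/-- The strict (asymmetric) part of a relation. -/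
def SPref (R : Linf → Linf → Prop) (x y : Linf) : Prop := R x y ∧ ¬ R y x

/-- (A1) Weak order: complete and transitive. -/
def A1 (R : Linf → Linf → Prop) : Prop :=
  (∀ x y, R x y ∨ R y x) ∧ ∀ x y z, R x y → R y z → R x z

/-- (A2) Monotonicity. -/
def A2 (R : Linf → Linf → Prop) : Prop :=
  (∀ x y : Linf, (∀ n, y n ≤ x n) → R x y) ∧ SPref R (cst 1) (cst 0)

/-- (A3) Continuity. -/
def A3 (R : Linf → Linf → Prop) : Prop := ∀ x y z : Linf,
  IsClosed {α : ℝ | α ∈ Set.Icc (0 : ℝ) 1 ∧ R (α • x + (1 - α) • z) y} ∧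
  IsClosed {α : ℝ | α ∈ Set.Icc (0 : ℝ) 1 ∧ R y (α • x + (1 - α) • z)}

/-- (A4) Invariance with respect to a common reference point. -/
def A4 (R : Linf → Linf → Prop) : Prop :=
  ∀ x y : Linf, ∀ θ : ℝ, R x y → R (x + cst θ) (y + cst θ)

/-- (A5) Convexity. -/
def A5 (R : Linf → Linf → Prop) : Prop :=
  ∀ x y : Linf, ∀ θ lam : ℝ, lam ∈ Set.Icc (0 : ℝ) 1 →
    R x (cst θ) → R y (cst θ) → R (lam • x + (1 - lam) • y) (cst θ)

/-- Axioms (A1)-(A5) together. -/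
def A15 (R : Linf → Linf → Prop) : Prop := A1 R ∧ A2 R ∧ A3 R ∧ A4 R ∧ A5 R

/-- (MC) Monotone continuity. -/
def MC (R : Linf → Linf → Prop) : Prop :=
  ∀ (x : Linf) (θ : ℝ), SPref R x (cst θ) →
    ∀ E : ℕ → Set ℕ, (∀ n, E (n + 1) ⊆ E n) → (⋂ n, E n) = ∅ →
      ∀ k : ℝ, ∃ n₀ : ℕ, SPref R (patch k (E n₀) x) (cst θ)

/-- (IDIS) Invariance with respect to delaying improving sequences. -/
def IDIS (R : Linf → Linf → Prop) : Prop :=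
  ∀ x d : Linf, R (x + d) x → R (x + delaySeq d) x

/-- (ISU) Invariance with respect to the scale of utils. -/
def ISU (R : Linf → Linf → Prop) : Prop :=
  ∀ x y : Linf, ∀ α : ℝ, 0 ≤ α → R x y → R (α • x) (α • y)

/-- (IOU) Invariance with respect to individual origins of utilities. -/
def IOU (R : Linf → Linf → Prop) : Prop :=
  ∀ x y z : Linf, (R x y ∧ R y x) → (R (x + z) (y + z) ∧ R (y + z) (x + z))

/-- Strong monotonicity. -/
def StrongMono (R : Linf → Linf → Prop) : Prop :=
  (∀ x y : Linf, (∀ n, y n ≤ x n) → R x y) ∧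
  ∀ x y : Linf, (∀ n, y n ≤ x n) → x ≠ y → SPref R x y

/-- (ITIS) Invariance with respect to applying `T` to improving sequences. -/
def ITIS (T : Linf → Linf) (R : Linf → Linf → Prop) : Prop :=
  ∀ x d : Linf, R (x + d) x → R (x + T d) x

/-- Time invariance: `x ∼ (x₁, x₂, x₃, ...)`. -/
def TimeInv (R : Linf → Linf → Prop) : Prop :=
  ∀ x : Linf, R x (shiftSeq x) ∧ R (shiftSeq x) x

/-- `I` is a constant equivalent for `≿`: `x ∼ I(x)` for every `x`. -/
def ConstEquiv (R : Linf → Linf → Prop) (I : Linf → ℝ) : Prop :=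
  ∀ x, R x (cst (I x)) ∧ R (cst (I x)) x

/-- `I` represents `≿`: `x ≿ y ↔ I(x) ≥ I(y)`. -/
def Represents (R : Linf → Linf → Prop) (I : Linf → ℝ) : Prop :=
  ∀ x y, R x y ↔ I y ≤ I x

/-! ### Discount structures -/

/-- A functional `p ∈ ba(ℕ)` is positive. -/
def IsPos (p : Ba) : Prop := ∀ x : Linf, (∀ n, 0 ≤ x n) → 0 ≤ p x

/-- `Δ`: the set of discount structures. -/
def Delta : Set Ba := {p | IsPos p ∧ p (cst 1) = 1}

/-- `Δ^σ`: countably additive discount structures. -/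
def DeltaSigma : Set Ba :=
  {p ∈ Delta | ∃ f : ℕ → ℝ, (∀ n, 0 ≤ f n) ∧ Summable f ∧ (∑' n, f n) = 1 ∧
    ∀ x : Linf, p x = ∑' n, f n * x n}

/-- `ℬ`: the set of Banach–Mazur limits. -/
def BM : Set Ba := {p ∈ Delta | ∀ x : Linf, p (shiftSeq x) = p x}

/-- The exponential discounting functionals with parameter `δ ∈ [0,1)`. -/
def Geom : Set Ba := {p | ∃ δ ∈ Set.Ico (0 : ℝ) 1, ∀ x : Linf, p x = discSum δ x}

/-- `Δ(T*)`: discount structures that are eigenvectors of the adjoint of `T`,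
expressed via the duality `⟨T x, p⟩ = λ ⟨x, p⟩`. -/
def DeltaT (T : Linf → Linf) : Set Ba :=
  {p ∈ Delta | ∃ lam : ℝ, ∀ x : Linf, p (T x) = lam * p x}

/-- A map `T : l∞ → l∞` is positive. -/
def PosMap (T : Linf → Linf) : Prop :=
  ∀ x : Linf, (∀ n, 0 ≤ x n) → ∀ n, 0 ≤ T x n

/-- `ca(ℕ)`: countably additive elements of `ba(ℕ)`. -/
def caSet : Set Ba :=
  {μ | ∀ A : ℕ → Set ℕ, (∀ n, A (n + 1) ⊆ A n) → (⋂ n, A n) = ∅ →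
    Filter.Tendsto (fun n => μ (indic (A n))) Filter.atTop (nhds 0)}

/-- `pa(ℕ)`: purely finitely additive elements of `ba(ℕ)`. -/
def paSet : Set Ba := {μ | ∀ n : ℕ, μ (indic {n}) = 0}

/-- `c` is grounded on `D`. -/
def Grounded (D : Set Ba) (c : Ba → ℝ≥0∞) : Prop := (⨅ p ∈ D, c p) = 0

/-- `c` is grounded on `[0,1]`. -/
def Grounded01 (c : ℝ → ℝ≥0∞) : Prop := (⨅ δ ∈ Set.Icc (0 : ℝ) 1, c δ) = 0

/-- Maxmin form: `I(x) = min_{p ∈ D} ⟨x,p⟩`, the minimum being attained. -/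
def MinForm (D : Set Ba) (I : Linf → ℝ) : Prop :=
  ∀ x, (∃ p ∈ D, I x = p x) ∧ ∀ p ∈ D, I x ≤ p x

/-- Variational form: `I(x) = min_{p ∈ D} {⟨x,p⟩ + c(p)}`, the minimum being attained. -/
def VarMinForm (D : Set Ba) (c : Ba → ℝ≥0∞) (I : Linf → ℝ) : Prop :=
  ∀ x, (∃ p ∈ D, (I x : EReal) = (p x : EReal) + (c p : EReal)) ∧
    ∀ p ∈ D, (I x : EReal) ≤ (p x : EReal) + (c p : EReal)

/-- Maxmin discounting form over a set of discount factors `E ⊆ [0,1)`. -/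
def MinDelta (E : Set ℝ) (I : Linf → ℝ) : Prop :=
  ∀ x, (∃ δ ∈ E, I x = discSum δ x) ∧ ∀ δ ∈ E, I x ≤ discSum δ x

/-- Variational discounting form over discount factors. -/
def VarMinDelta (E : Set ℝ) (c : ℝ → ℝ≥0∞) (I : Linf → ℝ) : Prop :=
  ∀ x, (∃ δ ∈ E, (I x : EReal) = (discSum δ x : EReal) + (c δ : EReal)) ∧
    ∀ δ ∈ E, (I x : EReal) ≤ (discSum δ x : EReal) + (c δ : EReal)

/-- Convexity for `ℝ≥0∞`-valued functions on a subset of `ba(ℕ)`. -/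
def ConvexENN (D : Set Ba) (g : Ba → ℝ≥0∞) : Prop :=
  ∀ p ∈ D, ∀ q ∈ D, ∀ a b : ℝ, 0 ≤ a → 0 ≤ b → a + b = 1 →
    g (a • p + b • q) ≤ ENNReal.ofReal a * g p + ENNReal.ofReal b * g q


private lemma cst_apply' (θ : ℝ) (n : ℕ) : cst θ n = θ := rfl

private lemma indic_apply' (A : Set ℕ) (n : ℕ) [Decidable (n ∈ A)] :
    indic A n = if n ∈ A then 1 else 0 := by
  show A.indicator (fun _ => (1:ℝ)) n = _
  rw [Set.indicator_apply]

private lemma permSeq_apply' (σ : Equiv.Perm ℕ) (x : Linf) (n : ℕ) :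
    permSeq σ x n = x (σ n) := rfl

private lemma exists_perm_sets (A B : Set ℕ) (hA : A.Infinite) (hA' : Aᶜ.Infinite)
    (hB : B.Infinite) (hB' : Bᶜ.Infinite) :
    ∃ σ : Equiv.Perm ℕ, ∀ n, σ n ∈ B ↔ n ∈ A := by
  classical
  haveI : Infinite A := hA.to_subtype
  haveI : Infinite ↥Aᶜ := hA'.to_subtype
  haveI : Infinite B := hB.to_subtype
  haveI : Infinite ↥Bᶜ := hB'.to_subtype
  obtain ⟨dA⟩ := nonempty_denumerable ↥A
  obtain ⟨dA'⟩ := nonempty_denumerable ↥Aᶜ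
  obtain ⟨dB⟩ := nonempty_denumerable ↥B
  obtain ⟨dB'⟩ := nonempty_denumerable ↥Bᶜ
  let e1 : A ≃ B := (Denumerable.eqv A).trans (Denumerable.eqv B).symm
  let e2 : ↥Aᶜ ≃ ↥Bᶜ := (Denumerable.eqv ↥Aᶜ).trans (Denumerable.eqv ↥Bᶜ).symm
  refine ⟨(Equiv.Set.sumCompl A).symm.trans ((e1.sumCongr e2).trans (Equiv.Set.sumCompl B)), ?_⟩
  intro n
  by_cases h : n ∈ A
  · simp only [Equiv.trans_apply, Equiv.Set.sumCompl_symm_apply_of_mem h,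
      Equiv.sumCongr_apply, Sum.map_inl, Equiv.Set.sumCompl_apply_inl]
    exact ⟨fun _ => h, fun _ => (e1 ⟨n, h⟩).2⟩
  · simp only [Equiv.trans_apply, Equiv.Set.sumCompl_symm_apply_of_notMem h,
      Equiv.sumCongr_apply, Sum.map_inr, Equiv.Set.sumCompl_apply_inr]
    exact ⟨fun hb => absurd hb (e2 ⟨n, h⟩).2, fun hb => absurd hb h⟩

private lemma class_infinite (M k : ℕ) (hM : 0 < M) (hk : k < M) :
    {i : ℕ | i % M = k}.Infinite := by
  refine Set.infinite_of_injective_forall_mem (f := fun t : ℕ => k + M * t) ?_ ?_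
  · intro a b hab
    simp only at hab
    exact Nat.eq_of_mul_eq_mul_left hM (by omega)
  · intro t
    simp only [Set.mem_setOf_eq, Nat.add_mul_mod_self_left, Nat.mod_eq_of_lt hk]

private lemma class_coinfinite (M k : ℕ) (hM : 2 ≤ M) (hk : k < M) :
    {i : ℕ | i % M = k}ᶜ.Infinite := by
  have hk' : (k + 1) % M < M := Nat.mod_lt _ (by omega)
  have hne : (k + 1) % M ≠ k := by
    rcases Nat.lt_or_ge (k + 1) M with h1 | h1
    · rw [Nat.mod_eq_of_lt h1]; omega
    · have : k + 1 = M := by omega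
      rw [this, Nat.mod_self]; omega
  refine (class_infinite M ((k + 1) % M) (by omega) hk').mono ?_
  intro i hi
  simp only [Set.mem_setOf_eq] at hi
  simp only [Set.mem_compl_iff, Set.mem_setOf_eq]
  omega

private lemma convex_n (R : Linf → Linf → Prop) (hA5 : A5 R) (θ : ℝ) :
    ∀ (m : ℕ) (y : ℕ → Linf), (∀ k, R (y k) (cst θ)) →
      R ((((m : ℝ) + 1)⁻¹) • ∑ k ∈ Finset.range (m + 1), y k) (cst θ) := by
  intro m
  induction m with
  | zero =>
    intro y hy
    simpa [Finset.sum_range_one] using hy 0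
  | succ m ih =>
    intro y hy
    have hm1 : ((m : ℝ) + 1) ≠ 0 := by positivity
    have hm2 : ((m : ℝ) + 2) ≠ 0 := by positivity
    have key := hA5 ((((m : ℝ) + 1)⁻¹) • ∑ k ∈ Finset.range (m + 1), y k) (y (m + 1)) θ
      (((m : ℝ) + 1) / ((m : ℝ) + 2))
      ⟨by positivity, by rw [div_le_one (by positivity)]; linarith⟩
      (ih y hy) (hy (m + 1))
    have h3 : (((m : ℝ) + 1) / ((m : ℝ) + 2)) * ((m : ℝ) + 1)⁻¹ = ((m : ℝ) + 2)⁻¹ := by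
      field_simp
    have h4 : 1 - ((m : ℝ) + 1) / ((m : ℝ) + 2) = ((m : ℝ) + 2)⁻¹ := by
      field_simp
      norm_num
    have e : (((m : ℝ) + 1) / ((m : ℝ) + 2)) • ((((m : ℝ) + 1)⁻¹) • ∑ k ∈ Finset.range (m + 1), y k)
        + (1 - ((m : ℝ) + 1) / ((m : ℝ) + 2)) • y (m + 1)
        = (((m : ℝ) + 2)⁻¹) • ∑ k ∈ Finset.range (m + 2), y k := by
      rw [Finset.sum_range_succ (n := m + 1), smul_smul, h3, h4, smul_add]
    rw [e] at key
    have : ((m : ℝ) + 2) = (((m + 1 : ℕ) : ℝ) + 1) := by push_cast; ring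
    rwa [this] at key

/-- Proposition: impossibility for IPIS: no binary relation on `l∞`
satisfying (A1)-(A5), ISU and invariance with respect to (arbitrary) permutations of
improving sequences admits a constant equivalent. -/
theorem stmt15 (R : Linf → Linf → Prop) (h15 : A15 R) (hisu : ISU R)
    (hipis : ∀ σ : Equiv.Perm ℕ, ∀ x d : Linf, R (x + d) x → R (x + permSeq σ d) x) :
    ¬ ∃ I : Linf → ℝ, ∀ x : Linf, R x (cst (I x)) ∧ R (cst (I x)) x := by
  classical
  rintro ⟨I, hI⟩
  obtain ⟨⟨hcomp, htrans⟩, ⟨hmono, hstrict⟩, _, hA4, hA5⟩ := h15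
  -- constants are ordered by value
  have cst_add : ∀ a b : ℝ, cst a + cst b = cst (a + b) := by
    intro a b; ext n; simp [cst_apply']
  have const_le : ∀ a b : ℝ, R (cst a) (cst b) → b ≤ a := by
    intro a b hab
    by_contra hlt
    push_neg at hlt
    have hba : (0:ℝ) < b - a := sub_pos.mpr hlt
    have hα : (0:ℝ) ≤ (b - a)⁻¹ := by positivity
    have h1 := hisu _ _ _ hα hab
    have e1 : ∀ t : ℝ, (b - a)⁻¹ • cst t = cst ((b - a)⁻¹ * t) := by
      intro t; ext n; simp [cst_apply']
    rw [e1 a, e1 b] at h1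
    have h2 := hA4 _ _ (-((b - a)⁻¹ * a)) h1
    rw [cst_add, cst_add] at h2
    have e2 : (b - a)⁻¹ * a + -((b - a)⁻¹ * a) = 0 := by ring
    have e3 : (b - a)⁻¹ * b + -((b - a)⁻¹ * a) = 1 := by
      field_simp
      ring
    rw [e2, e3] at h2
    exact hstrict.2 h2
  -- Step 1: permutation invariance of indicators on the preferred side
  have step1 : ∀ A₀ : Set ℕ, A₀.Infinite → A₀ᶜ.Infinite →
      ∀ A : Set ℕ, A.Infinite → Aᶜ.Infinite → R (indic A) (cst (I (indic A₀))) := by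
    intro A₀ h1 h2 A h3 h4
    obtain ⟨σ, hσ⟩ := exists_perm_sets A A₀ h3 h4 h1 h2
    set c := I (indic A₀) with hc
    have hx : R (cst c + (indic A₀ - cst c)) (cst c) := by
      have e : cst c + (indic A₀ - cst c) = indic A₀ := by abel
      rw [e]
      exact (hI (indic A₀)).1
    have h5 := hipis σ (cst c) (indic A₀ - cst c) hx
    have e : cst c + permSeq σ (indic A₀ - cst c) = indic A := by
      ext n
      have := hσ n
      by_cases h : n ∈ A
      · simp [permSeq_apply', indic_apply', cst_apply', h, this.mpr h]
      · have : σ n ∉ A₀ := fun hh => h (this.mp hh)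
        simp [permSeq_apply', indic_apply', cst_apply', h, this]
    rwa [e] at h5
  -- Step 2: the constant equivalent of any infinite-coinfinite indicator is ≤ 0
  have step2 : ∀ A₀ : Set ℕ, A₀.Infinite → A₀ᶜ.Infinite → I (indic A₀) ≤ 0 := by
    intro A₀ h1 h2
    set c := I (indic A₀) with hc
    have hble : ∀ m : ℕ, c ≤ ((m : ℝ) + 2)⁻¹ := by
      intro m
      set M := m + 2 with hM
      have hM2 : 2 ≤ M := by omega
      set y : ℕ → Linf := fun k => indic {i | i % M = k % M} with hy
      have hyk : ∀ k, R (y k) (cst c) := by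
        intro k
        exact step1 A₀ h1 h2 _
          (class_infinite M (k % M) (by omega) (Nat.mod_lt _ (by omega)))
          (class_coinfinite M (k % M) hM2 (Nat.mod_lt _ (by omega)))
      have h6 := convex_n R hA5 c (m + 1) y hyk
      have hsum : ∑ k ∈ Finset.range (m + 2), y k = cst 1 := by
        ext n
        rw [BoundedContinuousFunction.coe_sum, Finset.sum_apply]
        have : ∀ k ∈ Finset.range (m + 2), y k n = if n % M = k then (1:ℝ) else 0 := by
          intro k hk
          rw [Finset.mem_range] at hk
          simp [hy, indic_apply', Nat.mod_eq_of_lt (show k < M by omega)]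
        rw [Finset.sum_congr rfl this]
        have hmem : n % M ∈ Finset.range (m + 2) := by
          rw [Finset.mem_range]
          exact Nat.mod_lt _ (by omega)
        rw [Finset.sum_ite_eq (Finset.range (m + 2)) (n % M) (fun _ => (1:ℝ))]
        simp [hmem, cst_apply']
      rw [hsum] at h6
      have e2 : (((m + 1 : ℕ) : ℝ) + 1)⁻¹ • cst (1:ℝ) = cst (((m : ℝ) + 2)⁻¹) := by
        ext n
        show (((m + 1 : ℕ) : ℝ) + 1)⁻¹ • cst (1:ℝ) n = _
        push_cast
        simp [cst_apply']
        ring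
      rw [e2] at h6
      exact const_le _ _ h6
    by_contra hc0
    push_neg at hc0
    obtain ⟨mm, hmm⟩ := exists_nat_gt (1 / c)
    have hle := hble mm
    have hpos : (0:ℝ) < (mm : ℝ) + 2 := by positivity
    have h7 : (1:ℝ) < c * ((mm : ℝ) + 2) := by
      rw [div_lt_iff₀ hc0] at hmm
      nlinarith
    have h8 : ((mm : ℝ) + 2)⁻¹ < c := by
      rw [inv_eq_one_div, div_lt_iff₀ hpos]
      linarith
    linarith
  -- Final contradiction using the odd numbers
  set O : Set ℕ := {i : ℕ | i % 2 = 1} with hOdef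
  have hO : O.Infinite := class_infinite 2 1 (by norm_num) (by norm_num)
  have hOc : Oᶜ.Infinite := class_coinfinite 2 1 le_rfl (by norm_num)
  have hc0 : I (indic O) ≤ 0 := step2 O hO hOc
  have h1 : R (cst 0) (indic O) := by
    refine htrans _ _ _ (hmono (cst 0) (cst (I (indic O))) ?_) (hI (indic O)).2
    intro n
    simpa [cst_apply'] using hc0
  have h2 := hA4 _ _ (-1) h1
  rw [cst_add] at h2
  norm_num at h2
  have e2 : indic O + cst (-1) = -(indic Oᶜ) := by
    ext n
    by_cases h : n ∈ O
    · simp [indic_apply', cst_apply', h]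
    · simp [indic_apply', cst_apply', h]
  rw [e2] at h2
  -- h2 : R (cst (-1)) (-(indic Oᶜ))
  have e3 : -(indic Oᶜ) + -(indic O) = cst (-1) := by
    ext n
    by_cases h : n ∈ O
    · simp [indic_apply', cst_apply', h]
    · simp [indic_apply', cst_apply', h]
  obtain ⟨σ, hσ⟩ := exists_perm_sets Oᶜ O hOc (by rwa [compl_compl]) hO hOc
  have h3 : R (-(indic Oᶜ) + -(indic O)) (-(indic Oᶜ)) := by rw [e3]; exact h2
  have h4 := hipis σ (-(indic Oᶜ)) (-(indic O)) h3
  have e4 : -(indic Oᶜ) + permSeq σ (-(indic O)) = -(indic Oᶜ) + -(indic Oᶜ) := by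
    congr 1
    ext n
    have := hσ n
    by_cases h : n ∈ Oᶜ
    · simp [permSeq_apply', indic_apply', this.mpr h, h]
    · have hn : σ n ∉ O := fun hh => h (this.mp hh)
      simp [permSeq_apply', indic_apply', hn, h]
  rw [e4] at h4
  have h5 := hisu _ _ (1/2 : ℝ) (by norm_num) h4
  have e5 : (1/2 : ℝ) • (-(indic Oᶜ) + -(indic Oᶜ)) = -(indic Oᶜ) := by
    ext n
    show (1/2 : ℝ) • (-(indic Oᶜ) + -(indic Oᶜ)) n = _
    simp
    ring
  rw [e5] at h5
  -- h5 : R (-(indic Oᶜ)) ((1/2) • -(indic Oᶜ))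
  have h6 : R ((1/2 : ℝ) • -(indic Oᶜ)) (cst (-(1/2))) := by
    refine hmono _ _ ?_
    intro n
    by_cases h : n ∈ O
    · simp [indic_apply', cst_apply', h]
    · simp [indic_apply', cst_apply', h]
  have h7 := htrans _ _ _ (htrans _ _ _ h2 h5) h6
  have := const_le _ _ h7
  linarith

end
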